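/- Let w ∈ ℝⁿ have strictly positive entries and let F₀,…,F_{J+1} be n×n real matrices satisfying the lower frame bound c‖x‖_w² ≤ Σ_{j=0}^{J+1} ‖F_j x‖_w² for all x ∈ ℝⁿ, for some c > 0. Fix m ≥ 1. If x, y ∈ ℝⁿ satisfy B[j₁,k₁,…,j_m,k_m](x) = B[j₁,k₁,…,j_m,k_m](y) for every tuple (j₁,k₁,…,j_m,k_m) with jᵢ ∈ {0,…,J+1} and kᵢ ∈ {1,2}, then x = y. In other words, the m-layer BLIS module B_m is injective on ℝⁿ. -/
import Mathlib


open Matrix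

/-- The weighted squared norm `‖x‖_w² = Σᵢ wᵢ² xᵢ²`. -/
noncomputable def wnorm2 {n : ℕ} (w x : Fin n → ℝ) : ℝ := ∑ i, (w i) ^ 2 * (x i) ^ 2

/-- The two activations: `act 0 = σ₁` is the entrywise ReLU and `act 1 = σ₂` is the
entrywise reflected ReLU. -/
def act {n : ℕ} (k : Fin 2) (x : Fin n → ℝ) : Fin n → ℝ :=
  if k = 0 then (fun i => max (x i) 0) else (fun i => max (-(x i)) 0)

/-- The BLIS coefficient `B[j₁,k₁,…,j_m,k_m](x) = σ_{k_m}(F_{j_m} ⋯ σ_{k_1}(F_{j_1} x) ⋯)`,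
where `js i = j_{i+1}` and `ks i = k_{i+1}`. -/
noncomputable def blis {n N : ℕ} (F : Fin N → Matrix (Fin n) (Fin n) ℝ) :
    (m : ℕ) → (Fin m → Fin N) → (Fin m → Fin 2) → (Fin n → ℝ) → Fin n → ℝ
  | 0, _, _, x => x
  | m + 1, js, ks, x =>
      act (ks (Fin.last m)) ((F (js (Fin.last m))) *ᵥ blis F m (Fin.init js) (Fin.init ks) x)

lemma act_sub {n : ℕ} (v : Fin n → ℝ) : act 0 v - act 1 v = v := by
  funext i
  simp [act]

lemma wnorm2_nonneg {n : ℕ} (w z : Fin n → ℝ) : 0 ≤ wnorm2 w z :=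
  Finset.sum_nonneg fun i _ => by positivity

lemma wnorm2_eq_zero {n : ℕ} (w : Fin n → ℝ) (hw : ∀ i, 0 < w i)
    (z : Fin n → ℝ) (h : wnorm2 w z = 0) : z = 0 := by
  funext i
  have := (Finset.sum_eq_zero_iff_of_nonneg (fun i _ => by positivity)).mp h i
    (Finset.mem_univ i)
  have hwi := (hw i).ne'
  have : (z i) ^ 2 = 0 := by
    rcases mul_eq_zero.mp this with h1 | h1
    · exact absurd h1 (by positivity)
    · exact h1
  simpa using pow_eq_zero_iff (n := 2) (by norm_num) |>.mp this

theorem blis_injective {n J : ℕ} (w : Fin n → ℝ) (hw : ∀ i, 0 < w i)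
    (F : Fin (J + 2) → Matrix (Fin n) (Fin n) ℝ) (c : ℝ) (hc : 0 < c)
    (hframe : ∀ x : Fin n → ℝ, c * wnorm2 w x ≤ ∑ j, wnorm2 w ((F j) *ᵥ x))
    (m : ℕ) (hm : 1 ≤ m) (x y : Fin n → ℝ)
    (h : ∀ (js : Fin m → Fin (J + 2)) (ks : Fin m → Fin 2),
      blis F m js ks x = blis F m js ks y) :
    x = y := by
  clear hm
  induction m with
  | zero =>
      have := h Fin.elim0 Fin.elim0
      simpa [blis] using this
  | succ m ih =>
      apply ih
      intro js ks
      -- show blis F m js ks x = blis F m js ks y using frame condition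
      set u := blis F m js ks x with hu
      set v := blis F m js ks y with hv
      have key : ∀ j : Fin (J + 2), F j *ᵥ u = F j *ᵥ v := by
        intro j
        have h0 := h (Fin.snoc js j) (Fin.snoc ks 0)
        have h1 := h (Fin.snoc js j) (Fin.snoc ks 1)
        simp only [blis, Fin.snoc_last, Fin.init_snoc] at h0 h1
        calc F j *ᵥ u = act 0 (F j *ᵥ u) - act 1 (F j *ᵥ u) := (act_sub _).symm
          _ = act 0 (F j *ᵥ v) - act 1 (F j *ᵥ v) := by rw [h0, h1]
          _ = F j *ᵥ v := act_sub _
      have hsum : ∑ j, wnorm2 w ((F j) *ᵥ (u - v)) = 0 := by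
        apply Finset.sum_eq_zero
        intro j _
        rw [Matrix.mulVec_sub, key j, sub_self]
        simp [wnorm2]
      have hle := hframe (u - v)
      rw [hsum] at hle
      have hz : wnorm2 w (u - v) = 0 := by
        nlinarith [wnorm2_nonneg w (u - v)]
      have := wnorm2_eq_zero w hw _ hz
      exact sub_eq_zero.mp this
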